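/- (Partial GroupMax Network outputs are partially convex and continuous.) Fix integers d_x, d_y, K ≥ 1, G ≥ 1, E ≥ 1 and set h = G·E. Let Y ⊆ ℝ^{d_y}. Suppose given continuous matrix- and vector-valued functions on Y: W_0 : Y → ℝ^{h×d_x} and b_0 : Y → ℝ^h; for 1 ≤ k ≤ K−1, W_k : Y → ℝ^{h×G} with all entries nonnegative, W^r_k : Y → ℝ^{h×d_x}, and b_k : Y → ℝ^h; and finally w^x : Y → ℝ^G with all entries nonnegative, w^r : Y → ℝ^{d_x}, and b : Y → ℝ. Define GroupMax : ℝ^h → ℝ^G by identifying ℝ^h with ℝ^{G×E} and setting (GroupMax(v))_g = max_{1 ≤ e ≤ E} v_{g,e}. Define recursively x_0(x, y) = x; h_k(x, y) = W_{k−1}(y)·x_{k−1}(x, y) + W^r_{k−1}(y)·x + b_{k−1}(y) (with W^r_0 taken to be the zero matrix) and x_k(x, y) = GroupMax(h_k(x, y)) for 1 ≤ k ≤ K; and output z(x, y) = ⟨w^x(y), x_K(x, y)⟩ + ⟨w^r(y), x⟩ + b(y). Then z is continuous on ℝ^{d_x} × Y, and for every fixed y ∈ Y, the map x ↦ z(x,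 y) is convex on ℝ^{d_x}. -/

import Mathlib

open Finset

namespace PartialGroupMax

/-- The GroupMax activation: the `h = G·E` inputs are identified with `ℝ^{G×E}`;
group `g` outputs the maximum of its `E` entries. -/
noncomputable def groupMax {G E : ℕ} [NeZero E] (v : Fin G × Fin E → ℝ) :
    Fin G → ℝ :=
  fun g => Finset.univ.sup' Finset.univ_nonempty fun e : Fin E => v (g, e)

/-- The hidden layers of a Partial GroupMax Network: `pgmHidden … k x y` is the hidden
state `x_{k+1}(x, y)`. Layer 1 is `GroupMax(W₀(y)·x + b₀(y))` (the residual matrix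
`Wʳ₀` is taken to be zero), and layer `k+1` is
`GroupMax(W_k(y)·x_k + Wʳ_k(y)·x + b_k(y))`. -/
noncomputable def pgmHidden {dx dy G E : ℕ} [NeZero E]
    (W0 : (Fin dy → ℝ) → Fin G × Fin E → Fin dx → ℝ)
    (b0 : (Fin dy → ℝ) → Fin G × Fin E → ℝ)
    (W : ℕ → (Fin dy → ℝ) → Fin G × Fin E → Fin G → ℝ)
    (Wr : ℕ → (Fin dy → ℝ) → Fin G × Fin E → Fin dx → ℝ)
    (bb : ℕ → (Fin dy → ℝ) → Fin G × Fin E → ℝ) :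
    ℕ → (Fin dx → ℝ) → (Fin dy → ℝ) → Fin G → ℝ
  | 0 => fun x y => groupMax fun ge => (∑ j, W0 y ge j * x j) + b0 y ge
  | (k + 1) => fun x y => groupMax fun ge =>
      (∑ g, W (k + 1) y ge g * pgmHidden W0 b0 W Wr bb k x y g) +
      (∑ j, Wr (k + 1) y ge j * x j) + bb (k + 1) y ge

/-! ### Auxiliary lemmas -/

lemma convexOn_add' {E' : Type*} [AddCommMonoid E'] [Module ℝ E'] {s : Set E'}
    {f g : E' → ℝ} (hf : ConvexOn ℝ s f) (hg : ConvexOn ℝ s g) :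
    ConvexOn ℝ s (fun x => f x + g x) := hf.add hg

lemma convexOn_sum' {ι E' : Type*} [AddCommMonoid E'] [Module ℝ E'] {s : Set E'}
    (hs : Convex ℝ s) (t : Finset ι) (f : ι → E' → ℝ)
    (h : ∀ i ∈ t, ConvexOn ℝ s (f i)) :
    ConvexOn ℝ s (fun x => ∑ i ∈ t, f i x) := by
  classical
  induction t using Finset.induction_on with
  | empty => simpa using convexOn_const 0 hs
  | insert _ _ hnotmem ih =>
    simp only [Finset.sum_insert hnotmem]
    exact convexOn_add' (h _ (Finset.mem_insert_self _ _))
      (ih fun i hi => h i (Finset.mem_insert_of_mem hi))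

lemma convexOn_sup' {ι E' : Type*} [AddCommMonoid E'] [Module ℝ E'] {s : Set E'}
    (hs : Convex ℝ s) (t : Finset ι) (hne : t.Nonempty) (f : ι → E' → ℝ)
    (h : ∀ i ∈ t, ConvexOn ℝ s (f i)) :
    ConvexOn ℝ s (fun x => t.sup' hne fun i => f i x) := by
  refine ⟨hs, fun x hx y hy a b ha hb hab => ?_⟩
  rw [Finset.sup'_le_iff]
  intro i hi
  calc f i (a • x + b • y) ≤ a • f i x + b • f i y := (h i hi).2 hx hy ha hb hab
    _ ≤ a • (t.sup' hne fun i => f i x) + b • (t.sup' hne fun i => f i y) := by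
        have h1 : f i x ≤ t.sup' hne fun i => f i x := Finset.le_sup' (fun i => f i x) hi
        have h2 : f i y ≤ t.sup' hne fun i => f i y := Finset.le_sup' (fun i => f i y) hi
        simp only [smul_eq_mul]
        exact add_le_add (mul_le_mul_of_nonneg_left h1 ha)
          (mul_le_mul_of_nonneg_left h2 hb)

lemma convexOn_affine {n : ℕ} (c : Fin n → ℝ) (d : ℝ) :
    ConvexOn ℝ (Set.univ : Set (Fin n → ℝ)) (fun x => (∑ j, c j * x j) + d) := by
  refine ⟨convex_univ, fun x _ y _ a b ha hb hab => ?_⟩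
  have hsum : ∑ j, c j * (a • x + b • y) j
      = a * (∑ j, c j * x j) + b * (∑ j, c j * y j) := by
    rw [Finset.mul_sum, Finset.mul_sum, ← Finset.sum_add_distrib]
    refine Finset.sum_congr rfl fun j _ => ?_
    simp [Pi.add_apply, Pi.smul_apply, smul_eq_mul]
    ring
  simp only [smul_eq_mul, hsum]
  have hkey : a * ((∑ j, c j * x j) + d) + b * ((∑ j, c j * y j) + d)
      = a * (∑ j, c j * x j) + b * (∑ j, c j * y j) + (a + b) * d := by ring
  rw [hkey, hab, one_mul]

lemma convexOn_mul_of_nonneg {E' : Type*} [AddCommMonoid E'] [Module ℝ E'] {s : Set E'}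
    {f : E' → ℝ} {c : ℝ} (hc : 0 ≤ c) (hf : ConvexOn ℝ s f) :
    ConvexOn ℝ s (fun x => c * f x) := by
  simpa [smul_eq_mul] using hf.smul hc

/-- Main induction: each component of each hidden layer (up to layer `K-1`) is
jointly continuous on `univ ×ˢ Y` and convex in `x` for each `y ∈ Y`. -/
lemma pgmHidden_props {dx dy G E : ℕ} [NeZero E] (K : ℕ)
    (Y : Set (Fin dy → ℝ))
    (W0 : (Fin dy → ℝ) → Fin G × Fin E → Fin dx → ℝ)
    (b0 : (Fin dy → ℝ) → Fin G × Fin E → ℝ)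
    (W : ℕ → (Fin dy → ℝ) → Fin G × Fin E → Fin G → ℝ)
    (Wr : ℕ → (Fin dy → ℝ) → Fin G × Fin E → Fin dx → ℝ)
    (bb : ℕ → (Fin dy → ℝ) → Fin G × Fin E → ℝ)
    (hW0 : ∀ ge j, ContinuousOn (fun y => W0 y ge j) Y)
    (hb0 : ∀ ge, ContinuousOn (fun y => b0 y ge) Y)
    (hW : ∀ k, 1 ≤ k → k ≤ K - 1 → ∀ ge g, ContinuousOn (fun y => W k y ge g) Y)
    (hWr : ∀ k, 1 ≤ k → k ≤ K - 1 → ∀ ge j, ContinuousOn (fun y => Wr k y ge j) Y)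
    (hbb : ∀ k, 1 ≤ k → k ≤ K - 1 → ∀ ge, ContinuousOn (fun y => bb k y ge) Y)
    (hWpos : ∀ k, 1 ≤ k → k ≤ K - 1 → ∀ y ∈ Y, ∀ ge g, 0 ≤ W k y ge g) :
    ∀ k, k ≤ K - 1 →
      (∀ g, ContinuousOn
        (fun q : (Fin dx → ℝ) × (Fin dy → ℝ) => pgmHidden W0 b0 W Wr bb k q.1 q.2 g)
        ((Set.univ : Set (Fin dx → ℝ)) ×ˢ Y)) ∧
      (∀ y ∈ Y, ∀ g, ConvexOn ℝ (Set.univ : Set (Fin dx → ℝ))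
        (fun x => pgmHidden W0 b0 W Wr bb k x y g)) := by
  have hmapsY : ∀ q ∈ ((Set.univ : Set (Fin dx → ℝ)) ×ˢ Y), q.2 ∈ Y :=
    fun q hq => hq.2
  have hmemY : ∀ y ∈ Y, ∀ x : Fin dx → ℝ,
      (x, y) ∈ ((Set.univ : Set (Fin dx → ℝ)) ×ˢ Y) :=
    fun y hy x => ⟨Set.mem_univ x, hy⟩
  intro k
  induction k with
  | zero =>
    intro _
    constructor
    · intro g
      simp only [pgmHidden, groupMax]
      refine ContinuousOn.finset_sup'_apply Finset.univ_nonempty fun e _ => ?_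
      refine ContinuousOn.add ?_ ?_
      · refine continuousOn_finset_sum _ fun j _ => ?_
        exact ((hW0 (g, e) j).comp continuous_snd.continuousOn hmapsY).mul
          ((continuous_apply j).comp continuous_fst).continuousOn
      · exact (hb0 (g, e)).comp continuous_snd.continuousOn hmapsY
    · intro y hy g
      simp only [pgmHidden, groupMax]
      exact convexOn_sup' convex_univ _ _ _
        (fun e _ => convexOn_affine (fun j => W0 y (g, e) j) (b0 y (g, e)))
  | succ k ih =>
    intro hk
    have hk' : k ≤ K - 1 := le_of_lt (lt_of_lt_of_le (Nat.lt_succ_self k) hk)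
    have hk1 : 1 ≤ k + 1 := Nat.succ_le_succ (Nat.zero_le k)
    obtain ⟨ihc, ihv⟩ := ih hk'
    constructor
    · intro g
      simp only [pgmHidden, groupMax]
      refine ContinuousOn.finset_sup'_apply Finset.univ_nonempty fun e _ => ?_
      refine ContinuousOn.add (ContinuousOn.add ?_ ?_) ?_
      · refine continuousOn_finset_sum _ fun g' _ => ?_
        exact ((hW (k + 1) hk1 hk (g, e) g').comp continuous_snd.continuousOn
          hmapsY).mul (ihc g')
      · refine continuousOn_finset_sum _ fun j _ => ?_
        exact ((hWr (k + 1) hk1 hk (g, e) j).comp continuous_snd.continuousOn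
          hmapsY).mul ((continuous_apply j).comp continuous_fst).continuousOn
      · exact (hbb (k + 1) hk1 hk (g, e)).comp continuous_snd.continuousOn hmapsY
    · intro y hy g
      simp only [pgmHidden, groupMax]
      refine convexOn_sup' convex_univ _ _ _ fun e _ => ?_
      refine convexOn_add' (convexOn_add' ?_ ?_) (convexOn_const _ convex_univ)
      · refine convexOn_sum' convex_univ _ _ fun g' _ => ?_
        exact convexOn_mul_of_nonneg (hWpos (k + 1) hk1 hk y hy (g, e) g') (ihv y hy g')
      · simpa using convexOn_affine (fun j => Wr (k + 1) y (g, e) j) 0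

/-- Partial GroupMax Network outputs are partially convex and
continuous. With all affine maps continuous functions of `y ∈ Y`, and all weight
matrices acting on the hidden state entrywise nonnegative, the output
`z(x, y) = ⟨wˣ(y), x_K(x, y)⟩ + ⟨wʳ(y), x⟩ + b(y)` of a `K`-layer Partial GroupMax
Network is continuous on `ℝ^{dx} × Y` and, for each fixed `y ∈ Y`, convex in `x`. -/
theorem pgm_network_partially_convex_and_continuous
    (dx dy K G E : ℕ) (hK : 1 ≤ K) (hG : 1 ≤ G) (hE : 1 ≤ E) [NeZero E]
    (Y : Set (Fin dy → ℝ))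
    (W0 : (Fin dy → ℝ) → Fin G × Fin E → Fin dx → ℝ)
    (b0 : (Fin dy → ℝ) → Fin G × Fin E → ℝ)
    (W : ℕ → (Fin dy → ℝ) → Fin G × Fin E → Fin G → ℝ)
    (Wr : ℕ → (Fin dy → ℝ) → Fin G × Fin E → Fin dx → ℝ)
    (bb : ℕ → (Fin dy → ℝ) → Fin G × Fin E → ℝ)
    (wx : (Fin dy → ℝ) → Fin G → ℝ)
    (wr : (Fin dy → ℝ) → Fin dx → ℝ)
    (b : (Fin dy → ℝ) → ℝ)
    -- continuity of all generated affine maps, as functions of y on Y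
    (hW0 : ∀ ge j, ContinuousOn (fun y => W0 y ge j) Y)
    (hb0 : ∀ ge, ContinuousOn (fun y => b0 y ge) Y)
    (hW : ∀ k, 1 ≤ k → k ≤ K - 1 → ∀ ge g, ContinuousOn (fun y => W k y ge g) Y)
    (hWr : ∀ k, 1 ≤ k → k ≤ K - 1 → ∀ ge j, ContinuousOn (fun y => Wr k y ge j) Y)
    (hbb : ∀ k, 1 ≤ k → k ≤ K - 1 → ∀ ge, ContinuousOn (fun y => bb k y ge) Y)
    (hwx : ∀ g, ContinuousOn (fun y => wx y g) Y)
    (hwr : ∀ j, ContinuousOn (fun y => wr y j) Y)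
    (hb : ContinuousOn b Y)
    -- nonnegativity of the hidden-state weight matrices
    (hWpos : ∀ k, 1 ≤ k → k ≤ K - 1 → ∀ y ∈ Y, ∀ ge g, 0 ≤ W k y ge g)
    (hwxpos : ∀ y ∈ Y, ∀ g, 0 ≤ wx y g)
    -- the network output
    (z : (Fin dx → ℝ) → (Fin dy → ℝ) → ℝ)
    (hz : ∀ x y, z x y =
      (∑ g, wx y g * pgmHidden W0 b0 W Wr bb (K - 1) x y g) +
      (∑ j, wr y j * x j) + b y) :
    ContinuousOn (fun q : (Fin dx → ℝ) × (Fin dy → ℝ) => z q.1 q.2)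
      ((Set.univ : Set (Fin dx → ℝ)) ×ˢ Y) ∧
    ∀ y ∈ Y, ConvexOn ℝ (Set.univ : Set (Fin dx → ℝ)) (fun x => z x y) := by
  obtain ⟨hc, hv⟩ := pgmHidden_props K Y W0 b0 W Wr bb hW0 hb0 hW hWr hbb hWpos
    (K - 1) le_rfl
  have hmapsY : ∀ q ∈ ((Set.univ : Set (Fin dx → ℝ)) ×ˢ Y), q.2 ∈ Y :=
    fun q hq => hq.2
  constructor
  · have : ContinuousOn
        (fun q : (Fin dx → ℝ) × (Fin dy → ℝ) =>
          (∑ g, wx q.2 g * pgmHidden W0 b0 W Wr bb (K - 1) q.1 q.2 g) +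
          (∑ j, wr q.2 j * q.1 j) + b q.2)
        ((Set.univ : Set (Fin dx → ℝ)) ×ˢ Y) := by
      refine ContinuousOn.add (ContinuousOn.add ?_ ?_) ?_
      · refine continuousOn_finset_sum _ fun g _ => ?_
        exact ((hwx g).comp continuous_snd.continuousOn hmapsY).mul (hc g)
      · refine continuousOn_finset_sum _ fun j _ => ?_
        exact ((hwr j).comp continuous_snd.continuousOn hmapsY).mul
          ((continuous_apply j).comp continuous_fst).continuousOn
      · exact hb.comp continuous_snd.continuousOn hmapsY
    exact this.congr fun q _ => hz q.1 q.2
  · intro y hy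
    have : ConvexOn ℝ (Set.univ : Set (Fin dx → ℝ))
        (fun x => (∑ g, wx y g * pgmHidden W0 b0 W Wr bb (K - 1) x y g) +
          (∑ j, wr y j * x j) + b y) := by
      refine convexOn_add' (convexOn_add' ?_ ?_) (convexOn_const _ convex_univ)
      · refine convexOn_sum' convex_univ _ _ fun g _ => ?_
        exact convexOn_mul_of_nonneg (hwxpos y hy g) (hv y hy g)
      · simpa using convexOn_affine (fun j => wr y j) 0
    simpa only [← hz] using this
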